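/- Let B ≥ 2 and k ≥ 3 be integers, H_B = Σ_{j=1}^{B} 1/j, and define L_1 = H_B and L_m = 1 + log(L_{m−1}) for m > 1. Suppose positive real numbers q_0 = 1, q_1, …, q_{k−1} satisfy q_{k−2} = H_B · q_{k−1} and q_{i−1}/q_i = 1 + log(q_i/q_{i+1}) for every i ∈ {1, …, k−2}. Then q_i = 1/∏_{j=1}^{i} L_{k−j} for every i ∈ {1, …, k−1}. -/
import Mathlib


open Finset

/-- `LseqAux HB m` is `L_{m+1}` from the paper: `L_1 = H_B`, `L_m = 1 + log L_{m−1}`. -/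
noncomputable def LseqAux (HB : ℝ) : ℕ → ℝ
  | 0 => HB
  | m + 1 => 1 + Real.log (LseqAux HB m)

/-- for `B ≥ 2`, `k ≥ 3`, `H_B` the `B`-th harmonic number, if positive
reals `q_0 = 1, q_1, …, q_{k−1}` satisfy the first-order optimality conditions
`q_{k−2} = H_B · q_{k−1}` and `q_{i−1}/q_i = 1 + log(q_i/q_{i+1})` for
`i ∈ {1, …, k−2}`, then `q_i = 1/∏_{j=1}^i L_{k−j}` for every `i ∈ {1, …, k−1}`. -/
theorem exp_bound_first_order_conditions_solution (B k : ℕ) (hB : 2 ≤ B) (hk : 3 ≤ k)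
    (HB : ℝ) (hHB : HB = ∑ j ∈ Finset.range B, 1 / ((j : ℝ) + 1))
    (q : ℕ → ℝ) (hq0 : q 0 = 1) (hq : ∀ i : ℕ, i ≤ k - 1 → 0 < q i)
    (hlast : q (k - 2) = HB * q (k - 1))
    (hfoc : ∀ i : ℕ, 1 ≤ i → i ≤ k - 2 →
      q (i - 1) / q i = 1 + Real.log (q i / q (i + 1))) :
    ∀ i : ℕ, 1 ≤ i → i ≤ k - 1 →
      q i = 1 / ∏ j ∈ Finset.Icc 1 i, LseqAux HB (k - j - 1) := by
  -- key: ratio lemma by downward induction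
  have key : ∀ d : ℕ, d ≤ k - 2 → q (k - 2 - d) / q (k - 1 - d) = LseqAux HB d := by
    intro d
    induction d with
    | zero =>
      intro _
      have h1 : (0:ℝ) < q (k - 1) := hq _ le_rfl
      simp only [Nat.sub_zero, LseqAux]
      rw [hlast, mul_div_assoc, div_self (ne_of_gt h1), mul_one]
    | succ d ih =>
      intro hd
      have hd' : d ≤ k - 2 := by omega
      have ihd := ih hd'
      have hi1 : 1 ≤ k - 2 - d := by omega
      have hi2 : k - 2 - d ≤ k - 2 := by omega
      have := hfoc (k - 2 - d) hi1 hi2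
      have e1 : k - 2 - d - 1 = k - 2 - (d + 1) := by omega
      have e2 : k - 2 - d + 1 = k - 1 - d := by omega
      have e3 : k - 1 - (d + 1) = k - 2 - d := by omega
      rw [e1, e2] at this
      rw [e3, this, ihd]
      simp [LseqAux]
  have ratio : ∀ i : ℕ, 1 ≤ i → i ≤ k - 1 → q (i - 1) / q i = LseqAux HB (k - 1 - i) := by
    intro i h1 h2
    have hd : k - 1 - i ≤ k - 2 := by omega
    have := key (k - 1 - i) hd
    have e1 : k - 2 - (k - 1 - i) = i - 1 := by omega
    have e2 : k - 1 - (k - 1 - i) = i := by omega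
    rwa [e1, e2] at this
  have main : ∀ i : ℕ, 1 ≤ i → i ≤ k - 1 →
      q i * ∏ j ∈ Finset.Icc 1 i, LseqAux HB (k - j - 1) = 1 := by
    intro i
    induction i with
    | zero => intro h; omega
    | succ i ih =>
      intro _ h2
      rcases Nat.eq_zero_or_pos i with hi0 | hi0
      · subst hi0
        have hr := ratio 1 le_rfl (by omega)
        have hq1 : (0:ℝ) < q 1 := hq 1 (by omega)
        simp only [Finset.Icc_self, Finset.prod_singleton]
        have : q 0 / q 1 = LseqAux HB (k - 1 - 1) := hr
        rw [hq0, div_eq_iff (ne_of_gt hq1)] at this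
        rw [show 0 + 1 = 1 from rfl, show k - 1 - 1 = k - 1 - 1 from rfl]
        nlinarith [this]
      · have h1 : 1 ≤ i := hi0
        have hih := ih h1 (by omega)
        have hr := ratio (i + 1) (by omega) h2
        have hqi : (0:ℝ) < q (i + 1) := hq _ h2
        have hqe : q i = LseqAux HB (k - 1 - (i + 1)) * q (i + 1) := by
          have := hr
          simp only [Nat.add_sub_cancel] at this
          field_simp at this
          linarith [this]
        rw [Finset.prod_Icc_succ_top (by omega : 1 ≤ i + 1)]
        have e : k - (i + 1) - 1 = k - 1 - (i + 1) := by omega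
        rw [e]
        calc q (i + 1) * (( ∏ j ∈ Finset.Icc 1 i, LseqAux HB (k - j - 1)) * LseqAux HB (k - 1 - (i+1)))
            = (LseqAux HB (k - 1 - (i+1)) * q (i+1)) * ∏ j ∈ Finset.Icc 1 i, LseqAux HB (k - j - 1) := by ring
          _ = q i * ∏ j ∈ Finset.Icc 1 i, LseqAux HB (k - j - 1) := by rw [← hqe]
          _ = 1 := hih
  intro i h1 h2
  have hm := main i h1 h2
  have hqi : (0:ℝ) < q i := hq i h2
  have hP : (∏ j ∈ Finset.Icc 1 i, LseqAux HB (k - j - 1)) = 1 / q i :=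
    eq_one_div_of_mul_eq_one_right hm
  rw [hP, one_div_one_div]
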